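/- arXiv:2604.03200 — 3 statements merged into one kernel-verified Lean document; each statement's English description precedes it below -/
import Mathlib

section
/- Let h : X → ℝ be a function on the state space of a discrete-time system x(t+1) = f(x(t), u(t)), and suppose there exists a class-K function α with α(s) < s for all s > 0 such that for every state x(t) ∈ X there is an admissible input u(t) with h(f(x(t),u(t))) - h(x(t)) ≥ -α(h(x(t))). Then the set S = {x ∈ X : h(x) ≥ 0} is forward invariant: if x(0) ∈ S, then x(t) ∈ S for all t ≥ 0 under a control sequence satisfying the condition. -/
/-- Discrete-time CBF invariance theorem: if `h` is a discrete-time CBF for the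
system `x(t+1) = f(x(t), u(t))` with class-K function `α` satisfying `α s < s`
for `s > 0`, then the safe set `{x | h x ≥ 0}` is forward invariant along
trajectories satisfying the CBF condition. -/
theorem stmt_0 {X U : Type*} (f : X → U → X) (h : X → ℝ) (α : ℝ → ℝ)
    (hαc : Continuous α) (hαm : StrictMono α) (hα0 : α 0 = 0)
    (hαlt : ∀ s > (0:ℝ), α s < s)
    (hCBF : ∀ x : X, ∃ u : U, h (f x u) - h x ≥ -α (h x))
    (x : ℕ → X) (u : ℕ → U)
    (hdyn : ∀ t, x (t + 1) = f (x t) (u t))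
    (hsat : ∀ t, h (x (t + 1)) - h (x t) ≥ -α (h (x t)))
    (hinit : h (x 0) ≥ 0) :
    ∀ t, h (x t) ≥ 0 := by
  intro t
  induction t with
  | zero => exact hinit
  | succ n ih =>
    have := hsat n
    rcases eq_or_lt_of_le ih with he | hp
    · have : α (h (x n)) = 0 := by rw [← he, hα0]
      linarith [hsat n]
    · have := hαlt _ hp
      linarith [hsat n]
end

section
/- Let h : X → ℝ be of relative degree 2 for the discrete-time system x(t+1)=f(x(t),u(t)). Define ψ₀(x)=h(x), ψ₁(x(t))=ψ₀(x(t+1))-ψ₀(x(t))+α₁(ψ₀(x(t))) and ψ₂(x(t),u(t))=ψ₁(x(t+1))-ψ₁(x(t))+α₂(ψ₁(x(t))), where α₁,α₂ are class-K functions with αⱼ(s)<s for s>0. If for every x(t) ∈ S₀ ∩ S₁ there exists an admissible input u(t) with ψ₂(x(t),u(t)) ≥ 0, where Sⱼ={x : ψⱼ(x) ≥ 0}, then S₀ ∩ S₁ is forward invariant. -/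
/-- Discrete-time HOCBF theorem for relative degree 2: if for every state in
`S₀ ∩ S₁` there exists an admissible input with `ψ₂ ≥ 0`, then `S₀ ∩ S₁` is
forward invariant along trajectories satisfying the HOCBF condition. -/
theorem stmt_1 {X U : Type*} (f : X → U → X) (h : X → ℝ)
    (α₁ α₂ : ℝ → ℝ)
    (hα₁c : Continuous α₁) (hα₁m : StrictMono α₁) (hα₁0 : α₁ 0 = 0)
    (hα₁lt : ∀ s > (0:ℝ), α₁ s < s)
    (hα₂c : Continuous α₂) (hα₂m : StrictMono α₂) (hα₂0 : α₂ 0 = 0)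
    (hα₂lt : ∀ s > (0:ℝ), α₂ s < s)
    -- relative degree 2: `h ∘ f` does not depend on the input
    (hnext : X → ℝ) (hrel : ∀ x u, h (f x u) = hnext x)
    (ψ₁ : X → ℝ) (hψ₁ : ∀ x, ψ₁ x = hnext x - h x + α₁ (h x))
    (ψ₂ : X → U → ℝ) (hψ₂ : ∀ x u, ψ₂ x u = ψ₁ (f x u) - ψ₁ x + α₂ (ψ₁ x))
    (hcond : ∀ x : X, h x ≥ 0 → ψ₁ x ≥ 0 → ∃ u : U, ψ₂ x u ≥ 0)
    (x : ℕ → X) (u : ℕ → U)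
    (hdyn : ∀ t, x (t + 1) = f (x t) (u t))
    (hsat : ∀ t, h (x t) ≥ 0 → ψ₁ (x t) ≥ 0 → ψ₂ (x t) (u t) ≥ 0)
    (hinit : h (x 0) ≥ 0 ∧ ψ₁ (x 0) ≥ 0) :
    ∀ t, h (x t) ≥ 0 ∧ ψ₁ (x t) ≥ 0 := by
  intro t
  induction t with
  | zero => exact hinit
  | succ t ih =>
    obtain ⟨h0, h1⟩ := ih
    have hα₁le : α₁ (h (x t)) ≤ h (x t) := by
      rcases lt_or_eq_of_le h0 with hp | he
      · exact le_of_lt (hα₁lt _ hp)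
      · rw [← he, hα₁0]
    have hα₂le : α₂ (ψ₁ (x t)) ≤ ψ₁ (x t) := by
      rcases lt_or_eq_of_le h1 with hp | he
      · exact le_of_lt (hα₂lt _ hp)
      · rw [← he, hα₂0]
    have h2 := hsat t h0 h1
    rw [hψ₂] at h2
    constructor
    · have := hψ₁ (x t)
      rw [hdyn t, hrel]
      linarith
    · rw [hdyn t]
      linarith
end

section
/- For the general higher-order construction ψ₀=h, ψⱼ(x(t))=ψⱼ₋₁(x(t+1))-ψⱼ₋₁(x(t))+αⱼ(ψⱼ₋₁(x(t))) for j=1,…,r with class-K functions αⱼ satisfying αⱼ(s)<s for s>0, if ψᵣ(x(t),u(t)) ≥ 0 holds along a trajectory whenever x(t) ∈ ⋂_{j=0}^{r-1} Sⱼ, then the intersection ⋂_{j=0}^{r-1} Sⱼ (with Sⱼ={x: ψⱼ(x) ≥ 0}) is forward invariant for the discrete-time system. -/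
/-- Discrete-time HOCBF theorem for arbitrary relative degree `r ≥ 1`:
along a trajectory of `x(t+1) = f(x(t), u(t))`, if `ψᵣ(t) ≥ 0` whenever
`x(t) ∈ ⋂_{j<r} Sⱼ`, then the intersection of the sets `Sⱼ = {ψⱼ ≥ 0}` is
forward invariant. -/
theorem stmt_2 {X U : Type*} (f : X → U → X) (h : X → ℝ)
    (r : ℕ) (hr : 1 ≤ r) (α : ℕ → ℝ → ℝ)
    (hαc : ∀ j, Continuous (α j)) (hαm : ∀ j, StrictMono (α j))
    (hα0 : ∀ j, α j 0 = 0) (hαlt : ∀ j, ∀ s > (0:ℝ), α j s < s)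
    (x : ℕ → X) (u : ℕ → U)
    (hdyn : ∀ t, x (t + 1) = f (x t) (u t))
    (Ψ : ℕ → ℕ → ℝ)
    (hΨ0 : ∀ t, Ψ 0 t = h (x t))
    (hrec : ∀ j < r, ∀ t, Ψ (j + 1) t = Ψ j (t + 1) - Ψ j t + α (j + 1) (Ψ j t))
    (hsat : ∀ t, (∀ j < r, Ψ j t ≥ 0) → Ψ r t ≥ 0)
    (hinit : ∀ j < r, Ψ j 0 ≥ 0) :
    ∀ t, ∀ j < r, Ψ j t ≥ 0 := by
  intro t
  induction t with
  | zero => exact hinit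
  | succ t ih =>
    intro j hj
    have hnext : Ψ (j + 1) t ≥ 0 := by
      rcases lt_or_eq_of_le (Nat.succ_le_of_lt hj) with h' | h'
      · exact ih (j + 1) h'
      · have := hsat t ih; simpa [← h'] using this
    have hjt := ih j hj
    have hαle : α (j + 1) (Ψ j t) ≤ Ψ j t := by
      rcases eq_or_lt_of_le hjt with h0 | h0
      · rw [← h0, hα0]
      · exact le_of_lt (hαlt (j + 1) _ h0)
    have := hrec j hj t
    linarith
end
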